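/- Every regular T1 Baire quasi-developable paratopological group G is a metrizable topological group (in particular, the inverse operation on G is continuous and the topology of G is metrizable). -/

import Mathlib

open Topology Filter Set Uniformity

/-- `P : ℕ → Set (Set X)` is a quasi-development for `X`: each `P n` is a family of
open sets, and for every point `x` and open `U ∋ x` there is `n` with
`x ∈ st(x, P n) ⊆ U`, where `st(x, P n) = ⋃₀ {A ∈ P n | x ∈ A}`. -/
def IsQuasiDevelopment {X : Type*} [TopologicalSpace X] (P : ℕ → Set (Set X)) : Prop :=
  (∀ n, ∀ A ∈ P n, IsOpen A) ∧
  ∀ x : X, ∀ U : Set X, IsOpen U → x ∈ U →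
    ∃ n, x ∈ ⋃₀ {A | A ∈ P n ∧ x ∈ A} ∧ ⋃₀ {A | A ∈ P n ∧ x ∈ A} ⊆ U

/-- Every regular T1 Baire quasi-developable paratopological group is a metrizable
topological group: the inverse operation is continuous and the topology is metrizable. -/
theorem regular_baire_quasiDevelopable_paratopological_group_metrizable_topological_group
    {G : Type*} [Group G] [TopologicalSpace G] [ContinuousMul G]
    [RegularSpace G] [T1Space G] [BaireSpace G]
    (hqd : ∃ P : ℕ → Set (Set G), IsQuasiDevelopment P) :
    IsTopologicalGroup G ∧ TopologicalSpace.MetrizableSpace G := by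
  obtain ⟨P, hPopen, hP⟩ := hqd
  -- the star of x w.r.t. P n
  set st : G → ℕ → Set G := fun x n => ⋃₀ {A | A ∈ P n ∧ x ∈ A} with hst
  have hst_open : ∀ x n, IsOpen (st x n) :=
    fun x n => isOpen_sUnion fun A hA => hPopen n A hA.1
  -- first countability
  haveI fc : FirstCountableTopology G := by
    constructor
    intro x
    have hb : (𝓝 x).HasBasis (fun n => x ∈ st x n) (fun n => st x n) := by
      constructor
      intro U
      constructor
      · intro hU
        obtain ⟨V, hVU, hVo, hxV⟩ := mem_nhds_iff.mp hU
        obtain ⟨n, hn1, hn2⟩ := hP x V hVo hxV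
        exact ⟨n, hn1, hn2.trans hVU⟩
      · rintro ⟨n, hxn, hsub⟩
        exact Filter.mem_of_superset ((hst_open x n).mem_nhds hxn) hsub
    exact hb.isCountablyGenerated
  -- continuity of the inverse at 1
  have key : ∀ U ∈ 𝓝 (1 : G), {y : G | y⁻¹ ∈ U} ∈ 𝓝 (1 : G) := by
    intro U hU
    obtain ⟨V, hVo, hV1, hVV⟩ := exists_open_nhds_one_mul_subset hU
    -- S n : points whose n-th star is inside x·V
    set S : ℕ → Set G := fun n => {x | x ∈ st x n ∧ st x n ⊆ (fun y => x⁻¹ * y) ⁻¹' V} with hS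
    have hLopen : ∀ x : G, IsOpen ((fun y => x⁻¹ * y) ⁻¹' V) :=
      fun x => hVo.preimage (continuous_const.mul continuous_id)
    have hcover : (⋃ n, closure (S n)) = univ := by
      refine eq_univ_of_forall fun x => ?_
      have hx : x ∈ (fun y => x⁻¹ * y) ⁻¹' V := by
        simp [hV1]
      obtain ⟨n, hn1, hn2⟩ := hP x _ (hLopen x) hx
      exact mem_iUnion.2 ⟨n, subset_closure ⟨hn1, hn2⟩⟩
    obtain ⟨n, hn⟩ := nonempty_interior_of_iUnion_of_closed
      (fun n => isClosed_closure) hcover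
    set O : Set G := interior (closure (S n)) with hO
    have hOopen : IsOpen O := isOpen_interior
    -- pick x0 ∈ S n ∩ O
    obtain ⟨y0, hy0⟩ := hn
    have hy0c : y0 ∈ closure (S n) := interior_subset hy0
    obtain ⟨x0, hx0O, hx0S⟩ := mem_closure_iff_nhds.mp hy0c O (hOopen.mem_nhds hy0)
    obtain ⟨⟨A, ⟨hAP, hx0A⟩, _⟩, hx0st⟩ := hx0S
    -- the open set W
    set W : Set G := A ∩ O with hW
    have hWopen : IsOpen W := (hPopen n A hAP).inter hOopen
    have hx0W : x0 ∈ W := ⟨hx0A, hx0O⟩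
    -- T : candidate set
    set T : Set G := {y : G | (x0⁻¹ * y)⁻¹ ∈ V} with hT
    have hSWT : S n ∩ W ⊆ T := by
      rintro y ⟨⟨_, hyst⟩, hyA, _⟩
      have hx0y : x0 ∈ st y n := ⟨A, ⟨hAP, hyA⟩, hx0A⟩
      have : y⁻¹ * x0 ∈ V := hyst hx0y
      simpa [hT, mul_assoc] using this
    have hWT : W ⊆ closure T := by
      intro w hw
      have h1 : w ∈ W ∩ closure (S n) := ⟨hw, interior_subset hw.2⟩
      have h2 : w ∈ closure (W ∩ S n) := hWopen.inter_closure h1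
      refine closure_mono ?_ h2
      rw [inter_comm]; exact hSWT
    have hTU : closure T ⊆ {z : G | z⁻¹ * x0 ∈ U} := by
      intro z hz
      obtain ⟨y, hyL, hyT⟩ := mem_closure_iff_nhds.mp hz _
        ((hLopen z).mem_nhds (by simp [hV1]))
      have h1 : z⁻¹ * y ∈ V := hyL
      have h2 : y⁻¹ * x0 ∈ V := by simpa [hT, mul_assoc] using hyT
      have : (z⁻¹ * y) * (y⁻¹ * x0) ∈ U := hVV (mul_mem_mul h1 h2)
      simpa [mul_assoc] using this
    -- conclude: {y | y⁻¹ ∈ U} is a neighborhood of 1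
    have hNsub : (fun y : G => x0 * y) ⁻¹' W ⊆ {y : G | y⁻¹ ∈ U} := by
      intro y hy
      have : (x0 * y)⁻¹ * x0 ∈ U := hTU (hWT hy)
      simpa [mul_assoc] using this
    refine Filter.mem_of_superset ?_ hNsub
    have : (1 : G) ∈ (fun y : G => x0 * y) ⁻¹' W := by simpa using hx0W
    exact (hWopen.preimage (continuous_const.mul continuous_id)).mem_nhds this
  have inv_one : Tendsto (fun y : G => y⁻¹) (𝓝 1) (𝓝 (1 : G)) := by
    rw [Filter.tendsto_def]
    intro U hU
    exact key U hU
  haveI ci : ContinuousInv G := by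
    refine ⟨continuous_iff_continuousAt.mpr fun x => ?_⟩
    have h1 : Tendsto (fun y : G => x⁻¹ * y) (𝓝 x) (𝓝 1) := by
      have hc : Continuous (fun y : G => x⁻¹ * y) := continuous_const.mul continuous_id
      simpa using hc.tendsto x
    have h3 : Tendsto (fun z : G => z * x⁻¹) (𝓝 1) (𝓝 x⁻¹) := by
      have hc : Continuous (fun z : G => z * x⁻¹) := continuous_id.mul continuous_const
      simpa using hc.tendsto (1 : G)
    have : Tendsto (fun y : G => (x⁻¹ * y)⁻¹ * x⁻¹) (𝓝 x) (𝓝 x⁻¹) :=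
      h3.comp (inv_one.comp h1)
    have heq : (fun y : G => (x⁻¹ * y)⁻¹ * x⁻¹) = fun y : G => y⁻¹ := by
      funext y; group
    rwa [heq] at this
  haveI tg : IsTopologicalGroup G := ⟨⟩
  refine ⟨tg, ?_⟩
  letI : UniformSpace G := IsTopologicalGroup.rightUniformSpace G
  haveI : (𝓤 G).IsCountablyGenerated := by
    rw [uniformity_eq_comap_nhds_one']
    exact Filter.comap.isCountablyGenerated _ _
  exact UniformSpace.metrizableSpace
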